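/- arXiv:1909.02763 — 2 statements merged into one kernel-verified Lean document; each statement's English description precedes it below -/
import Mathlib

section
/- For m, n ∈ ℤ, let f_m(t) = 2 ∑_{i≥0} (λ_i / 4^i) t^{2m+2i+1} ∈ ℂ((t)). Then the residue Res_t(f_m'(t) · f_n(t)), i.e., the coefficient of t^{-1} in f_m' f_n, equals (8m+4) δ_{m+n+1,0} + (2m+2) δ_{m+n+2,0}. -/
noncomputable def lam (n : ℕ) : ℂ :=
  (∏ k ∈ Finset.range n, ((1 : ℂ) / 2 - k)) / n.factorial

/-- Formal derivative on Laurent series: (∑ c_k t^k)' = ∑ k c_k t^{k-1}. -/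
noncomputable def lderiv (F : LaurentSeries ℂ) : LaurentSeries ℂ where
  coeff k := (k + 1 : ℤ) • F.coeff (k + 1)
  isPWO_support' := by
    have h : (Function.support fun k : ℤ => (k + 1 : ℤ) • F.coeff (k + 1)) ⊆
        (fun k : ℤ => k - 1) '' F.support := by
      intro k hk
      simp only [Function.mem_support] at hk
      refine ⟨k + 1, ?_, by ring⟩
      simp only [HahnSeries.mem_support]
      intro h0
      apply hk
      rw [h0, smul_zero]
    exact (F.isPWO_support.image_of_monotone (fun a b hab => by omega)).mono h

/-- u = 2 ∑_{i≥0} (λ_i / 4^i) t^{2i+1} ∈ ℂ((t)). -/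
noncomputable def u : LaurentSeries ℂ :=
  HahnSeries.ofPowerSeries ℤ ℂ
    (PowerSeries.mk fun k => if Odd k then 2 * lam (k / 2) / 4 ^ (k / 2) else 0)

/-- f_m = 2 ∑_{i≥0} (λ_i/4^i) t^{2m+2i+1} = t^{2m} · u ∈ ℂ((t)). -/
noncomputable def f (m : ℤ) : LaurentSeries ℂ :=
  HahnSeries.single (2 * m : ℤ) (1 : ℂ) * u

/- ### Auxiliary combinatorial lemmas -/

lemma lam_zero : lam 0 = 1 := by simp [lam]

lemma lam_succ (n : ℕ) : ((n : ℂ) + 1) * lam (n + 1) = ((1 : ℂ) / 2 - n) * lam n := by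
  have hf : ((n.factorial : ℂ)) ≠ 0 := Nat.cast_ne_zero.mpr n.factorial_ne_zero
  have hn : ((n : ℂ) + 1) ≠ 0 := by
    have : ((n + 1 : ℕ) : ℂ) ≠ 0 := Nat.cast_ne_zero.mpr (Nat.succ_ne_zero n)
    push_cast at this; exact this
  unfold lam
  rw [Finset.prod_range_succ, Nat.factorial_succ]
  push_cast
  field_simp

noncomputable def S (K : ℕ) : ℂ := ∑ i ∈ Finset.range (K + 1), lam i * lam (K - i)

lemma S_zero : S 0 = 1 := by simp [S, lam_zero]

lemma lam_one : lam 1 = 1 / 2 := by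
  have := lam_succ 0
  simpa [lam_zero] using this

lemma S_one : S 1 = 1 := by
  simp [S, Finset.sum_range_succ, lam_zero, lam_one]
  norm_num

lemma two_T (K : ℕ) :
    2 * ∑ i ∈ Finset.range (K + 1), (i : ℂ) * (lam i * lam (K - i)) = (K : ℂ) * S K := by
  have h := Finset.sum_range_reflect (fun i => (i : ℂ) * (lam i * lam (K - i))) (K + 1)
  have h2 : ∑ j ∈ Finset.range (K + 1), ((K - j : ℕ) : ℂ) * (lam (K - j) * lam j)
      = ∑ i ∈ Finset.range (K + 1), (i : ℂ) * (lam i * lam (K - i)) := by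
    rw [← h]
    apply Finset.sum_congr rfl
    intro j hj
    simp only [Finset.mem_range] at hj
    have hjK : j ≤ K := by omega
    have e1 : K + 1 - 1 - j = K - j := by omega
    have e2 : K - (K - j) = j := by omega
    rw [e1, e2]
  rw [two_mul]
  nth_rewrite 1 [← h2]
  rw [← Finset.sum_add_distrib, S, Finset.mul_sum]
  apply Finset.sum_congr rfl
  intro j hj
  simp only [Finset.mem_range] at hj
  have hjK : j ≤ K := by omega
  have : ((K - j : ℕ) : ℂ) = (K : ℂ) - j := by
    push_cast [Nat.cast_sub hjK]; ring
  rw [this]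
  ring

lemma S_rec (K : ℕ) : ((K : ℂ) + 1) * S (K + 1) = (1 - (K : ℂ)) * S K := by
  have h1 : ∑ j ∈ Finset.range (K + 2), (j : ℂ) * (lam j * lam (K + 1 - j))
      = ∑ i ∈ Finset.range (K + 1), ((1 : ℂ) / 2 - i) * (lam i * lam (K - i)) := by
    rw [Finset.sum_range_succ']
    simp only [Nat.cast_zero, zero_mul, add_zero]
    apply Finset.sum_congr rfl
    intro i hi
    have e : K + 1 - (i + 1) = K - i := by omega
    rw [e]
    push_cast
    calc ((i : ℂ) + 1) * (lam (i + 1) * lam (K - i))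
        = (((i : ℂ) + 1) * lam (i + 1)) * lam (K - i) := by ring
      _ = (((1 : ℂ) / 2 - i) * lam i) * lam (K - i) := by rw [lam_succ]
      _ = ((1 : ℂ) / 2 - i) * (lam i * lam (K - i)) := by ring
  have h2 := two_T (K + 1)
  push_cast at h2
  rw [← h2, h1, Finset.mul_sum]
  have h3 := two_T K
  calc ∑ i ∈ Finset.range (K + 1), 2 * (((1 : ℂ) / 2 - i) * (lam i * lam (K - i)))
      = ∑ i ∈ Finset.range (K + 1), ((lam i * lam (K - i)) - 2 * ((i : ℂ) * (lam i * lam (K - i)))) := by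
        apply Finset.sum_congr rfl; intro i _; ring
    _ = S K - 2 * ∑ i ∈ Finset.range (K + 1), (i : ℂ) * (lam i * lam (K - i)) := by
        rw [Finset.sum_sub_distrib, ← Finset.mul_sum, S]
    _ = S K - (K : ℂ) * S K := by rw [h3]
    _ = (1 - (K : ℂ)) * S K := by ring

lemma S_eq_zero (K : ℕ) (hK : 2 ≤ K) : S K = 0 := by
  induction K with
  | zero => omega
  | succ K ih =>
    have h := S_rec K
    have hne : ((K : ℂ) + 1) ≠ 0 := by
      have : ((K + 1 : ℕ) : ℂ) ≠ 0 := Nat.cast_ne_zero.mpr (Nat.succ_ne_zero K)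
      push_cast at this; exact this
    rcases Nat.lt_or_ge K 2 with h2 | h2
    · interval_cases K
      · omega
      · rw [S_one] at h
        norm_num at h
        exact h
    · rw [ih h2, mul_zero] at h
      exact (mul_eq_zero.mp h).resolve_left hne

lemma W_sum (K : ℕ) (z : ℂ) :
    ∑ i ∈ Finset.range (K + 1), (z + 2 * i + 1) * (lam i * lam (K - i))
      = (z + 1 + K) * S K := by
  have h3 := two_T K
  calc ∑ i ∈ Finset.range (K + 1), (z + 2 * i + 1) * (lam i * lam (K - i))
      = ∑ i ∈ Finset.range (K + 1), ((z + 1) * (lam i * lam (K - i))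
          + 2 * ((i : ℂ) * (lam i * lam (K - i)))) := by
        apply Finset.sum_congr rfl; intro i _; ring
    _ = (z + 1) * S K + 2 * ∑ i ∈ Finset.range (K + 1), (i : ℂ) * (lam i * lam (K - i)) := by
        rw [Finset.sum_add_distrib, ← Finset.mul_sum, ← Finset.mul_sum, S]
    _ = (z + 1) * S K + (K : ℂ) * S K := by rw [h3]
    _ = (z + 1 + K) * S K := by ring

/- ### Power series / Hahn series layer -/

noncomputable def U : PowerSeries ℂ :=
  PowerSeries.mk fun k => if Odd k then 2 * lam (k / 2) / 4 ^ (k / 2) else 0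

noncomputable def D (m : ℤ) : PowerSeries ℂ :=
  PowerSeries.mk fun s =>
    (2 * m + s : ℂ) * (if Odd s then 2 * lam (s / 2) / 4 ^ (s / 2) else 0)

lemma ofP_coeff_neg (φ : PowerSeries ℂ) (j : ℤ) (hj : j < 0) :
    (HahnSeries.ofPowerSeries ℤ ℂ φ).coeff j = 0 := by
  rw [HahnSeries.ofPowerSeries_apply]
  apply HahnSeries.embDomain_notin_range
  rintro ⟨s, hs⟩
  simp only [Nat.castOrderEmbedding_apply] at hs
  omega

lemma single_one_mul_coeff (a k : ℤ) (F : LaurentSeries ℂ) :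
    (HahnSeries.single a (1 : ℂ) * F).coeff k = F.coeff (k - a) := by
  have := HahnSeries.coeff_single_mul_add (r := (1 : ℂ)) (x := F) (b := a) (a := k - a)
  rw [sub_add_cancel] at this
  rw [this, one_mul]

lemma u_eq : u = HahnSeries.ofPowerSeries ℤ ℂ U := rfl

lemma lderiv_f (m : ℤ) :
    lderiv (f m) = HahnSeries.single (2 * m - 1 : ℤ) (1 : ℂ) *
      HahnSeries.ofPowerSeries ℤ ℂ (D m) := by
  ext k
  have hl : (lderiv (f m)).coeff k = (k + 1 : ℤ) • (f m).coeff (k + 1) := rfl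
  rw [hl, single_one_mul_coeff]
  rw [f, single_one_mul_coeff, u_eq]
  have e : k - (2 * m - 1) = k + 1 - 2 * m := by ring
  rw [e]
  set j : ℤ := k + 1 - 2 * m with hj
  rcases lt_or_ge j 0 with hneg | hpos
  · rw [ofP_coeff_neg _ _ hneg, ofP_coeff_neg _ _ hneg, smul_zero]
  · lift j to ℕ using hpos with s hs
    rw [HahnSeries.ofPowerSeries_apply_coeff, HahnSeries.ofPowerSeries_apply_coeff]
    rw [U, D, PowerSeries.coeff_mk, PowerSeries.coeff_mk]
    rw [zsmul_eq_mul]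
    have : ((k + 1 : ℤ) : ℂ) = 2 * (m : ℂ) + s := by
      have : (k : ℤ) + 1 = 2 * m + s := by omega
      push_cast [this]; ring
    rw [this]

lemma prod_eq (m n : ℤ) :
    lderiv (f m) * f n = HahnSeries.single (2 * m + 2 * n - 1 : ℤ) (1 : ℂ) *
      HahnSeries.ofPowerSeries ℤ ℂ (D m * U) := by
  rw [lderiv_f, f, u_eq, map_mul]
  rw [mul_mul_mul_comm, HahnSeries.single_mul_single, one_mul]
  congr 2
  ring_nf

lemma coeff_DU (m : ℤ) (c : ℕ) :
    PowerSeries.coeff (2 * (c + 1)) (D m * U)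
      = (2 * (m : ℂ) + 1 + c) * S c * (4 / 4 ^ c) := by
  rw [PowerSeries.coeff_mul, Finset.Nat.sum_antidiagonal_eq_sum_range_succ_mk]
  set g : ℕ → ℂ := fun a =>
    PowerSeries.coeff a (D m) * PowerSeries.coeff (2 * (c + 1) - a) U with hg
  have gzero : ∀ a : ℕ, ¬ Odd a → g a = 0 := by
    intro a ha
    simp only [hg, D, PowerSeries.coeff_mk, if_neg ha, mul_zero, zero_mul]
  have himg : ∑ a ∈ Finset.range (2 * (c + 1) + 1), g a
      = ∑ i ∈ Finset.range (c + 1), g (2 * i + 1) := by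
    rw [← Finset.sum_image (f := g) (g := fun i => 2 * i + 1)
      (by intro x _ y _ hxy; beta_reduce at hxy; omega)]
    apply (Finset.sum_subset ?_ ?_).symm
    · intro a ha
      simp only [Finset.mem_image, Finset.mem_range] at ha ⊢
      obtain ⟨i, hi, rfl⟩ := ha
      omega
    · intro a ha hna
      apply gzero
      simp only [Finset.mem_image, Finset.mem_range] at ha hna
      intro ⟨i, hi⟩
      exact hna ⟨i, by omega, by omega⟩
  rw [himg]
  have hterm : ∀ i ∈ Finset.range (c + 1),
      g (2 * i + 1) = (2 * (m : ℂ) + 2 * i + 1) * (lam i * lam (c - i)) * (4 / 4 ^ c) := by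
    intro i hi
    simp only [Finset.mem_range] at hi
    have hic : i ≤ c := by omega
    have hodd1 : Odd (2 * i + 1) := odd_two_mul_add_one i
    have hdiv1 : (2 * i + 1) / 2 = i := by omega
    have e1 : 2 * (c + 1) - (2 * i + 1) = 2 * (c - i) + 1 := by omega
    have hodd2 : Odd (2 * (c - i) + 1) := odd_two_mul_add_one (c - i)
    have hdiv2 : (2 * (c - i) + 1) / 2 = c - i := by omega
    simp only [hg, D, U, PowerSeries.coeff_mk, e1, if_pos hodd1, if_pos hodd2,
      hdiv1, hdiv2]
    have h4 : (4 : ℂ) ^ i * 4 ^ (c - i) = 4 ^ c := by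
      rw [← pow_add]; congr 1; omega
    have h4i : (4 : ℂ) ^ i ≠ 0 := pow_ne_zero _ (by norm_num)
    have h4j : (4 : ℂ) ^ (c - i) ≠ 0 := pow_ne_zero _ (by norm_num)
    have h4c : (4 : ℂ) ^ c ≠ 0 := pow_ne_zero _ (by norm_num)
    rw [← h4]
    push_cast
    field_simp
    ring
  rw [Finset.sum_congr rfl hterm, ← Finset.sum_mul, W_sum c (2 * (m : ℂ))]

/-- Res_t(f_m' · f_n) = (8m+4) δ_{m+n+1,0} + (2m+2) δ_{m+n+2,0}, the residue
being the coefficient of t⁻¹. -/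
theorem res_fderiv_mul_f (m n : ℤ) :
    (lderiv (f m) * f n).coeff (-1) =
      (8 * m + 4 : ℂ) * (if m + n + 1 = 0 then 1 else 0) +
        (2 * m + 2 : ℂ) * (if m + n + 2 = 0 then 1 else 0) := by
  rw [prod_eq, single_one_mul_coeff]
  have e : (-1 : ℤ) - (2 * m + 2 * n - 1) = -2 * (m + n) := by ring
  rw [e]
  rcases lt_trichotomy (m + n) 0 with h | h | h
  · obtain ⟨c, hc⟩ : ∃ c : ℕ, m + n = -((c : ℤ) + 1) := ⟨((-(m + n)).toNat - 1), by omega⟩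
    have e2 : (-2 : ℤ) * (m + n) = ((2 * (c + 1) : ℕ) : ℤ) := by push_cast; omega
    rw [e2, HahnSeries.ofPowerSeries_apply_coeff, coeff_DU]
    have hn1 : m + n + 1 = 0 ↔ c = 0 := by omega
    have hn2 : m + n + 2 = 0 ↔ c = 1 := by omega
    rcases Nat.lt_or_ge c 2 with h2 | h2
    · interval_cases c
      · simp only [hn1, hn2]
        norm_num [S_zero]
        ring
      · simp only [hn1, hn2]
        norm_num [S_one]
        ring
    · rw [S_eq_zero c h2]
      have h1' : ¬(m + n + 1 = 0) := by omega
      have h2' : ¬(m + n + 2 = 0) := by omega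
      simp [h1', h2']
  · rw [h]
    have e2 : (-2 : ℤ) * 0 = ((0 : ℕ) : ℤ) := by norm_num
    rw [e2, HahnSeries.ofPowerSeries_apply_coeff]
    rw [PowerSeries.coeff_zero_eq_constantCoeff, map_mul]
    have : PowerSeries.constantCoeff U = 0 := by
      rw [U, ← PowerSeries.coeff_zero_eq_constantCoeff, PowerSeries.coeff_mk]
      norm_num
    rw [this, mul_zero]
    norm_num
  · rw [ofP_coeff_neg _ _ (by omega)]
    have h1' : ¬(m + n + 1 = 0) := by omega
    have h2' : ¬(m + n + 2 = 0) := by omega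
    simp only [if_neg h1', if_neg h2', mul_zero, add_zero]
end

section
/- For m, n ∈ ℤ, let f_m(t) = 2 ∑_{i≥0} (λ_i/4^i) t^{2m+2i+1} ∈ ℂ((t)). Then the product f_m(t) · f_n(t) equals the Laurent polynomial t^{2m+2n+4} + 4 t^{2m+2n+2}. -/
lemma lam_eq (n : ℕ) : lam n = Ring.choose ((1:ℂ)/2) n := by
  have hd : (descPochhammer ℂ n).eval ((1:ℂ)/2) = ∏ k ∈ Finset.range n, ((1 : ℂ) / 2 - k) := by
    induction n with
    | zero => simp
    | succ k ih => rw [descPochhammer_succ_eval, ih, Finset.prod_range_succ]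
  have hcast : (descPochhammer ℤ n).smeval ((1:ℂ)/2) = (descPochhammer ℂ n).eval ((1:ℂ)/2) := by
    rw [← Polynomial.aeval_eq_smeval, Polynomial.aeval_def, ← Polynomial.eval_map,
      descPochhammer_map]
  have h := Ring.descPochhammer_eq_factorial_smul_choose (R := ℂ) ((1:ℂ)/2) n
  rw [hcast, hd, nsmul_eq_mul] at h
  have hn : (n.factorial : ℂ) ≠ 0 := Nat.cast_ne_zero.mpr n.factorial_ne_zero
  rw [lam, h]
  field_simp

open Finset in
lemma key (s : ℕ) : ∑ p ∈ Finset.HasAntidiagonal.antidiagonal s, lam p.1 * lam p.2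
    = if s ≤ 1 then 1 else 0 := by
  have h := Ring.add_choose_eq (R := ℂ) (r := (1:ℂ)/2) (s := (1:ℂ)/2) s (Commute.all _ _)
  have h1 : ((1:ℂ)/2 + (1:ℂ)/2) = ((1:ℕ) : ℂ) := by norm_num
  rw [h1, Ring.choose_natCast] at h
  simp only [lam_eq]
  rw [← h]
  rcases Nat.lt_or_ge s 2 with hs | hs
  · interval_cases s <;> simp
  · have : ¬ s ≤ 1 := by omega
    rw [if_neg this, Nat.choose_eq_zero_of_lt (by omega), Nat.cast_zero]

open Finset in
lemma sum_odd_pairs (m : ℕ) (g : ℕ × ℕ → ℂ)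
    (hg : ∀ p : ℕ × ℕ, ¬ (Odd p.1 ∧ Odd p.2) → g p = 0) :
    ∑ p ∈ Finset.HasAntidiagonal.antidiagonal (2 * m + 2), g p
      = ∑ p ∈ Finset.HasAntidiagonal.antidiagonal m, g (2 * p.1 + 1, 2 * p.2 + 1) := by
  rw [← Finset.sum_image (f := g) (g := fun p : ℕ × ℕ => (2 * p.1 + 1, 2 * p.2 + 1))
    (by
      intro p _ q _ h
      have h1 : 2 * p.1 + 1 = 2 * q.1 + 1 := congrArg Prod.fst h
      have h2 : 2 * p.2 + 1 = 2 * q.2 + 1 := congrArg Prod.snd h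
      exact Prod.ext (by omega) (by omega))]
  refine (Finset.sum_subset ?_ ?_).symm
  · intro p hp
    obtain ⟨q, hq, rfl⟩ := Finset.mem_image.mp hp
    simp only [Finset.HasAntidiagonal.mem_antidiagonal] at hq ⊢
    omega
  · intro p hp hnp
    apply hg
    rintro ⟨⟨b, hb⟩, ⟨c, hc⟩⟩
    apply hnp
    simp only [Finset.HasAntidiagonal.mem_antidiagonal] at hp
    simp only [Finset.mem_image, Finset.HasAntidiagonal.mem_antidiagonal]
    exact ⟨(b, c), by omega, by simp [← hb, ← hc]⟩

lemma usq : u * u = HahnSeries.single (4 : ℤ) (1 : ℂ) + 4 * HahnSeries.single (2 : ℤ) (1 : ℂ) := by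
  set a : ℕ → ℂ := fun k => if Odd k then 2 * lam (k / 2) / 4 ^ (k / 2) else 0 with ha
  have hP : (PowerSeries.mk a) * (PowerSeries.mk a)
      = (PowerSeries.X : PowerSeries ℂ) ^ 4 + PowerSeries.C (4 : ℂ) * PowerSeries.X ^ 2 := by
    ext N
    rw [PowerSeries.coeff_mul]
    simp only [map_add, PowerSeries.coeff_X_pow, PowerSeries.coeff_C_mul, PowerSeries.coeff_mk]
    have hzero : ∀ p : ℕ × ℕ, ¬ (Odd p.1 ∧ Odd p.2) → a p.1 * a p.2 = 0 := by
      intro p hp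
      rw [ha]
      by_cases h1 : Odd p.1
      · have h2 : ¬ Odd p.2 := fun h => hp ⟨h1, h⟩
        simp [h2]
      · simp [h1]
    rcases Nat.even_or_odd N with hN | hN
    · obtain ⟨M, rfl⟩ := hN
      rcases Nat.eq_zero_or_pos M with rfl | hM
      · simp [ha]
      · obtain ⟨k, rfl⟩ : ∃ k, M = k + 1 := ⟨M - 1, by omega⟩
        rw [show k + 1 + (k + 1) = 2 * k + 2 by ring]
        rw [sum_odd_pairs k _ hzero]
        have hterm : ∀ p : ℕ × ℕ, p ∈ Finset.HasAntidiagonal.antidiagonal k →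
            a (2 * p.1 + 1) * a (2 * p.2 + 1) = (4 / 4 ^ k) * (lam p.1 * lam p.2) := by
          intro p hp
          simp only [Finset.HasAntidiagonal.mem_antidiagonal] at hp
          have h1 : Odd (2 * p.1 + 1) := ⟨p.1, by ring⟩
          have h2 : Odd (2 * p.2 + 1) := ⟨p.2, by ring⟩
          have d1 : (2 * p.1 + 1) / 2 = p.1 := by omega
          have d2 : (2 * p.2 + 1) / 2 = p.2 := by omega
          rw [ha]
          simp only [h1, h2, if_pos, d1, d2]
          rw [← hp]
          field_simp
          ring
        rw [Finset.sum_congr rfl hterm, ← Finset.mul_sum, key k]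
        rcases Nat.lt_or_ge k 2 with hk | hk
        · interval_cases k <;> norm_num
        · have h4 : ¬ (2 * k + 2 = 4) := by omega
          have h2 : ¬ (2 * k + 2 = 2) := by omega
          have hk1 : ¬ (k ≤ 1) := by omega
          rw [if_neg h4, if_neg h2, if_neg hk1]
          ring
    · have hsum : ∀ p : ℕ × ℕ, p ∈ Finset.HasAntidiagonal.antidiagonal N → a p.1 * a p.2 = 0 := by
        intro p hp
        simp only [Finset.HasAntidiagonal.mem_antidiagonal] at hp
        apply hzero
        rintro ⟨h1, h2⟩
        have hE : Even N := hp ▸ Odd.add_odd h1 h2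
        exact (Nat.not_even_iff_odd.mpr hN) hE
      rw [Finset.sum_eq_zero hsum]
      have h4 : ¬ (N = 4) := by rintro rfl; revert hN; decide
      have h2 : ¬ (N = 2) := by rintro rfl; revert hN; decide
      rw [if_neg h4, if_neg h2]
      ring
  show (HahnSeries.ofPowerSeries ℤ ℂ) _ * (HahnSeries.ofPowerSeries ℤ ℂ) _ = _
  rw [← map_mul, hP, map_add, map_mul, map_pow, map_pow, HahnSeries.ofPowerSeries_X,
    HahnSeries.ofPowerSeries_C]
  rw [HahnSeries.single_pow, HahnSeries.single_pow]
  norm_num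
  have h40 : (4 : LaurentSeries ℂ) = HahnSeries.single (0 : ℤ) (4 : ℂ) := by
    rw [← HahnSeries.C_apply, map_ofNat]
  rw [h40, HahnSeries.single_mul_single]
  norm_num

/-- f_m · f_n = t^{2m+2n+4} + 4 t^{2m+2n+2}. -/
theorem f_mul_f (m n : ℤ) : f m * f n =
    HahnSeries.single (2 * m + 2 * n + 4 : ℤ) (1 : ℂ) +
      4 * HahnSeries.single (2 * m + 2 * n + 2 : ℤ) (1 : ℂ) := by
  have h : f m * f n = (HahnSeries.single (2 * m : ℤ) (1 : ℂ) *
      HahnSeries.single (2 * n : ℤ) (1 : ℂ)) * (u * u) := by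
    rw [f, f]; ring
  rw [h, usq, HahnSeries.single_mul_single, mul_add]
  rw [HahnSeries.single_mul_single]
  rw [mul_left_comm, HahnSeries.single_mul_single]
  norm_num
end
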